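/- Let P, A, B, C be N×N complex matrices with P² = P, and suppose A = PA + AP, B = PB + BP, and C = PC + CP. Then tr([A, B]·[C, P]) = 0. In particular, if P(ξ_L, ξ_R) is a differentiable family of idempotent matrices (so each partial derivative ∂P satisfies ∂P = P·∂P + ∂P·P), then tr([∂_L P, ∂_R P]·[∂_D P, P]) = 0 for D ∈ {L, R}; geometrically, the vector ∂_L∂_R X = [∂_L P, ∂_R P] is orthogonal to the tangent vectors [∂_D P, P] of the surface. -/

import Mathlib

open Matrix

noncomputable section

attribute [local instance] Matrix.normedAddCommGroup Matrix.normedSpace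

/-- Vectors in ℂ^N. -/
abbrev Vec (N : ℕ) := Fin N → ℂ

/-- Hermitian inner product v† w. -/
def hermIP {N : ℕ} (v w : Vec N) : ℂ := dotProduct (star v) w

/-- The matrix v w†. -/
def outerM {N : ℕ} (v w : Vec N) : Matrix (Fin N) (Fin N) ℂ := vecMulVec v (star w)

/-- The projector P = 1 − (1/(f†f)) f f†. -/
def projM {N : ℕ} (f : Vec N) : Matrix (Fin N) (Fin N) ℂ :=
  1 - (1 / hermIP f f) • outerM f f

/-- Matrix commutator [A,B] = AB − BA. -/
def mcomm {N : ℕ} (A B : Matrix (Fin N) (Fin N) ℂ) : Matrix (Fin N) (Fin N) ℂ :=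
  A * B - B * A

/-- Light-cone direction ξ_L. -/
def dL : ℝ × ℝ := (1, 0)

/-- Light-cone direction ξ_R. -/
def dR : ℝ × ℝ := (0, 1)

/-- Directional (partial) derivative in direction `v`. -/
def pdv {E : Type*} [NormedAddCommGroup E] [NormedSpace ℝ E]
    (v : ℝ × ℝ) (g : ℝ × ℝ → E) (p : ℝ × ℝ) : E := fderiv ℝ g p v

/-- The CP^{N−1} Euler–Lagrange equation
P·(∂_L∂_R f − (1/(f†f))((f†∂_Rf)∂_Lf + (f†∂_Lf)∂_Rf)) = 0 at a point. -/
def EL {N : ℕ} (f : ℝ × ℝ → Vec N) (p : ℝ × ℝ) : Prop :=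
  projM (f p) *ᵥ (pdv dL (fun q => pdv dR f q) p
    - (1 / hermIP (f p) (f p)) • (hermIP (f p) (pdv dR f p) • pdv dL f p
      + hermIP (f p) (pdv dL f p) • pdv dR f p)) = 0


/-- Left multiplication as a continuous bilinear map on matrices. -/
def mulCLM (N : ℕ) : Matrix (Fin N) (Fin N) ℂ →L[ℝ] Matrix (Fin N) (Fin N) ℂ →L[ℝ] Matrix (Fin N) (Fin N) ℂ :=
  LinearMap.toContinuousLinearMap
    { toFun := fun A => LinearMap.toContinuousLinearMap (LinearMap.mulLeft ℝ A)
      map_add' := by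
        intro A A'
        ext B
        simp [add_mul]
      map_smul' := by
        intro c A
        ext B
        simp [smul_mul_assoc] }

@[simp] lemma mulCLM_apply {N : ℕ} (A B : Matrix (Fin N) (Fin N) ℂ) :
    mulCLM N A B = A * B := rfl

lemma key {N : ℕ} (P A B C : Matrix (Fin N) (Fin N) ℂ)
    (hA : A = P * A + A * P) (hB : B = P * B + B * P) :
    (mcomm A B * mcomm C P).trace = 0 := by
  have hPA : P * A = A - A * P := by rw [eq_sub_iff_add_eq]; exact hA.symm
  have hPB : P * B = B - B * P := by rw [eq_sub_iff_add_eq]; exact hB.symm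
  have hcom1 : P * (A * B) = A * B * P := by
    calc P * (A * B) = (P * A) * B := by rw [mul_assoc]
      _ = (A - A * P) * B := by rw [hPA]
      _ = A * B - A * (P * B) := by noncomm_ring
      _ = A * B - A * (B - B * P) := by rw [hPB]
      _ = A * B * P := by noncomm_ring
  have hcom2 : P * (B * A) = B * A * P := by
    calc P * (B * A) = (P * B) * A := by rw [mul_assoc]
      _ = (B - B * P) * A := by rw [hPB]
      _ = B * A - B * (P * A) := by noncomm_ring
      _ = B * A - B * (A - A * P) := by rw [hPA]
      _ = B * A * P := by noncomm_ring
  have hD : mcomm A B * P = P * mcomm A B := by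
    simp only [mcomm, sub_mul, mul_sub, hcom1, hcom2]
  have hsplit : mcomm A B * mcomm C P
      = mcomm A B * (C * P) - (mcomm A B * P) * C := by
    simp only [mcomm, mul_sub, mul_assoc]
  rw [hsplit, Matrix.trace_sub, sub_eq_zero, hD, mul_assoc,
    Matrix.trace_mul_comm P (mcomm A B * C), mul_assoc]

lemma deriv_rel {N : ℕ} (Ω : Set (ℝ × ℝ)) (hΩ : IsOpen Ω)
    (Pf : ℝ × ℝ → Matrix (Fin N) (Fin N) ℂ) (hPf : ContDiffOn ℝ 2 Pf Ω)
    (hid : ∀ p ∈ Ω, Pf p * Pf p = Pf p) (p : ℝ × ℝ) (hp : p ∈ Ω) (v : ℝ × ℝ) :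
    pdv v Pf p = Pf p * pdv v Pf p + pdv v Pf p * Pf p := by
  have hmem : Ω ∈ nhds p := hΩ.mem_nhds hp
  have hdiff : DifferentiableAt ℝ Pf p :=
    ((hPf.differentiableOn (by norm_num)).differentiableAt hmem)
  have hfd : HasFDerivAt Pf (fderiv ℝ Pf p) p := hdiff.hasFDerivAt
  letI : NormedAddCommGroup (Matrix (Fin N) (Fin N) ℂ →L[ℝ] Matrix (Fin N) (Fin N) ℂ) :=
    ContinuousLinearMap.toNormedAddCommGroup
  letI : NormedSpace ℝ (Matrix (Fin N) (Fin N) ℂ →L[ℝ] Matrix (Fin N) (Fin N) ℂ) :=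
    ContinuousLinearMap.toNormedSpace
  have h2 : HasFDerivAt (fun q => mulCLM N (Pf q))
      ((mulCLM N).comp (fderiv ℝ Pf p)) p :=
    ((mulCLM N).hasFDerivAt).comp p hfd
  have h3 : HasFDerivAt (fun q => Pf q * Pf q)
      ((mulCLM N (Pf p)).comp (fderiv ℝ Pf p)
        + (show ℝ × ℝ →L[ℝ] Matrix (Fin N) (Fin N) ℂ from
          ((mulCLM N).comp (fderiv ℝ Pf p)).flip (Pf p))) p := by
    exact h2.clm_apply hfd
  have heq : (fun q => Pf q * Pf q) =ᶠ[nhds p] Pf :=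
    Filter.eventuallyEq_of_mem hmem hid
  have hfe : fderiv ℝ Pf p
      = (mulCLM N (Pf p)).comp (fderiv ℝ Pf p)
        + (show ℝ × ℝ →L[ℝ] Matrix (Fin N) (Fin N) ℂ from
          ((mulCLM N).comp (fderiv ℝ Pf p)).flip (Pf p)) := by
    conv_lhs => rw [← heq.fderiv_eq]
    exact h3.fderiv
  have := congrArg (fun (L : (ℝ × ℝ) →L[ℝ] Matrix (Fin N) (Fin N) ℂ) => L v) hfe
  exact this

theorem stmt9 {N : ℕ}
    (P A B C : Matrix (Fin N) (Fin N) ℂ)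
    (hP : P * P = P) (hA : A = P * A + A * P) (hB : B = P * B + B * P)
    (hC : C = P * C + C * P) :
    (mcomm A B * mcomm C P).trace = 0 ∧
    (∀ Ω : Set (ℝ × ℝ), IsOpen Ω →
      ∀ Pf : ℝ × ℝ → Matrix (Fin N) (Fin N) ℂ, ContDiffOn ℝ 2 Pf Ω →
        (∀ p ∈ Ω, Pf p * Pf p = Pf p) →
        ∀ p ∈ Ω, ∀ v ∈ ({dL, dR} : Set (ℝ × ℝ)),
          (mcomm (pdv dL Pf p) (pdv dR Pf p) * mcomm (pdv v Pf p) (Pf p)).trace = 0) := by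
  refine ⟨key P A B C hA hB, ?_⟩
  intro Ω hΩ Pf hPf hid p hp v hv
  exact key (Pf p) _ _ _ (deriv_rel Ω hΩ Pf hPf hid p hp dL)
    (deriv_rel Ω hΩ Pf hPf hid p hp dR)
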